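/- Let n, m be natural numbers and work in Euclidean space ℝⁿ with its standard inner product ⟨·,·⟩ and norm. Let h : ℝⁿ → ℝ be continuously differentiable with gradient ∇h, and let α : ℝ → ℝ be locally Lipschitz, strictly increasing, with α(0) = 0. Let x : ℝ → ℝⁿ be differentiable on [0, ∞), let u : ℝ → ℝᵐ, and let f, f̂ : ℝ → ℝⁿ and g(t), ĝ(t) : ℝᵐ → ℝⁿ (continuous linear maps for each t) be such that for all t ≥ 0: (i) x'(t) = f(t) + g(t)(u(t)); (ii) ‖f̂(t) − f(t)‖ ≤ δ_F(t) and the operator norm of ĝ(t) − g(t) is at most δ_G(t), where δ_F(t), δ_G(t) ≥ 0; and (iii) ⟨∇h(x(t)), f̂(t) + ĝ(t)(u(t))⟩ + α(h(x(t))) ≥ ‖∇h(x(t))‖(δ_F(t) + δ_G(t)‖u(t)‖). If h(x(0)) ≥ 0, then h(x(t)) ≥ 0 for all t ≥ 0. -/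

import Mathlib

open scoped RealInnerProductSpace

/-- State-feedback form of Theorem 1 (exact state measurements): a trajectory of
the true dynamics `ẋ = f + g u` whose models `f̂, ĝ` satisfy the error bounds
`δ_F, δ_G` remains in the zero-superlevel set of `h` provided the robust control
barrier inequality holds along the trajectory and the trajectory starts in it. -/
theorem stmt_8 {n m : ℕ}
    (h : EuclideanSpace ℝ (Fin n) → ℝ) (hh : ContDiff ℝ 1 h)
    (α : ℝ → ℝ) (hα : LocallyLipschitz α) (hmono : StrictMono α) (hα0 : α 0 = 0)
    (x : ℝ → EuclideanSpace ℝ (Fin n)) (u : ℝ → EuclideanSpace ℝ (Fin m))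
    (f fhat : ℝ → EuclideanSpace ℝ (Fin n))
    (g ghat : ℝ → EuclideanSpace ℝ (Fin m) →L[ℝ] EuclideanSpace ℝ (Fin n))
    (δF δG : ℝ → ℝ) (hδF : ∀ t ≥ (0 : ℝ), 0 ≤ δF t) (hδG : ∀ t ≥ (0 : ℝ), 0 ≤ δG t)
    (hdyn : ∀ t ≥ (0 : ℝ), HasDerivWithinAt x (f t + g t (u t)) (Set.Ici 0) t)
    (herrF : ∀ t ≥ (0 : ℝ), ‖fhat t - f t‖ ≤ δF t)
    (herrG : ∀ t ≥ (0 : ℝ), ‖ghat t - g t‖ ≤ δG t)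
    (hbarrier : ∀ t ≥ (0 : ℝ),
      ‖gradient h (x t)‖ * (δF t + δG t * ‖u t‖) ≤
        ⟪gradient h (x t), fhat t + ghat t (u t)⟫ + α (h (x t)))
    (h0 : 0 ≤ h (x 0)) :
    ∀ t ≥ (0 : ℝ), 0 ≤ h (x t) := by
  have hdiff : Differentiable ℝ h := hh.differentiable one_ne_zero
  set y : ℝ → ℝ := fun t => h (x t) with hy
  set y' : ℝ → ℝ := fun t => ⟪gradient h (x t), f t + g t (u t)⟫ with hy'
  -- chain rule
  have hderiv : ∀ t ≥ (0 : ℝ), HasDerivWithinAt y (y' t) (Set.Ici 0) t := by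
    intro t ht
    have h1 : HasFDerivAt h (fderiv ℝ h (x t)) (x t) := (hdiff (x t)).hasFDerivAt
    have h2 := h1.comp_hasDerivWithinAt t (hdyn t ht)
    convert h2 using 1
    show ⟪gradient h (x t), f t + g t (u t)⟫ = _
    rw [gradient, InnerProductSpace.toDual_symm_apply]
    all_goals rfl
  -- lower bound on derivative
  have hbound : ∀ t ≥ (0 : ℝ), -α (y t) ≤ y' t := by
    intro t ht
    set p := gradient h (x t)
    set v := f t + g t (u t)
    set w := fhat t + ghat t (u t)
    have hwv : w - v = (fhat t - f t) + ((ghat t - g t) (u t)) := by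
      simp only [w, v, ContinuousLinearMap.sub_apply]
      abel
    have hnorm : ‖w - v‖ ≤ δF t + δG t * ‖u t‖ := by
      rw [hwv]
      refine (norm_add_le _ _).trans (add_le_add (herrF t ht) ?_)
      calc ‖(ghat t - g t) (u t)‖ ≤ ‖ghat t - g t‖ * ‖u t‖ :=
            ContinuousLinearMap.le_opNorm _ _
        _ ≤ δG t * ‖u t‖ := mul_le_mul_of_nonneg_right (herrG t ht) (norm_nonneg _)
    have hinner : ⟪p, w - v⟫ ≤ ‖p‖ * (δF t + δG t * ‖u t‖) :=
      (real_inner_le_norm p (w - v)).trans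
        (mul_le_mul_of_nonneg_left hnorm (norm_nonneg _))
    have hb := hbarrier t ht
    have hsplit : ⟪p, w - v⟫ = ⟪p, w⟫ - ⟪p, v⟫ := inner_sub_right _ _ _
    have : y' t = ⟪p, v⟫ := rfl
    rw [this]
    have hyt : α (h (x t)) = α (y t) := rfl
    linarith [hb, hinner, hsplit.symm ▸ hinner]
  -- comparison argument
  intro t₀ ht₀
  obtain ⟨K, s, hs, hK⟩ := hα 0
  obtain ⟨r, hr, hball⟩ := Metric.mem_nhds_iff.1 hs
  set L : ℝ := (K : ℝ) + 1 with hL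
  have hLpos : 0 < L := by positivity
  have hcontIcc : ContinuousOn (fun t => -(y t)) (Set.Icc 0 t₀) := by
    intro t ht
    exact (((hderiv t ht.1).continuousWithinAt).mono Set.Icc_subset_Ici_self).neg
  rw [← neg_nonpos]
  refine le_of_forall_pos_le_add (fun c hc => ?_)
  set c' : ℝ := min c (r / 2) with hc'
  have hc'pos : 0 < c' := lt_min hc (by positivity)
  set ε : ℝ := c' / Real.exp (L * t₀) with hε
  have hεpos : 0 < ε := div_pos hc'pos (Real.exp_pos _)
  set B : ℝ → ℝ := fun t => ε * Real.exp (L * t) with hB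
  set B' : ℝ → ℝ := fun t => ε * (Real.exp (L * t) * L) with hB'
  have hBderiv : ∀ t : ℝ, HasDerivAt B (B' t) t := by
    intro t
    have := (((hasDerivAt_id t).const_mul L).exp.const_mul ε)
    simpa [B, B', mul_comm] using this
  have hBc' : ∀ t ∈ Set.Icc (0 : ℝ) t₀, B t ≤ c' := by
    intro t ht
    have : Real.exp (L * t) ≤ Real.exp (L * t₀) :=
      Real.exp_le_exp.2 (mul_le_mul_of_nonneg_left ht.2 hLpos.le)
    calc B t = ε * Real.exp (L * t) := rfl
      _ ≤ ε * Real.exp (L * t₀) := mul_le_mul_of_nonneg_left this hεpos.le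
      _ = c' := div_mul_cancel₀ _ (Real.exp_ne_zero _)
  have key : ∀ ⦃t⦄, t ∈ Set.Icc (0 : ℝ) t₀ → -(y t) ≤ B t := by
    refine image_le_of_deriv_right_lt_deriv_boundary hcontIcc
      (fun t ht => ((hderiv t ht.1).mono (Set.Ici_subset_Ici.2 ht.1)).neg)
      ?_ hBderiv ?_
    · have : B 0 = ε := by simp [hB]
      rw [this]
      linarith
    · intro t ht heq
      have htIcc : t ∈ Set.Icc (0 : ℝ) t₀ := ⟨ht.1, ht.2.le⟩
      have hBpos : 0 < B t := by positivity
      have hBr : B t < r := lt_of_le_of_lt (hBc' t htIcc) (lt_of_le_of_lt (min_le_right _ _) (by linarith))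
      have hymem : y t ∈ s := by
        apply hball
        have : y t = -(B t) := by linarith [heq]
        rw [this]
        simp only [Metric.mem_ball, dist_zero_right, Real.norm_eq_abs, abs_neg,
          abs_of_pos hBpos]
        exact hBr
      have h0mem : (0 : ℝ) ∈ s := hball (Metric.mem_ball_self hr)
      have hlip : dist (α (y t)) (α 0) ≤ K * dist (y t) 0 := hK.dist_le_mul _ hymem _ h0mem
      have hyB : y t = -(B t) := by linarith [heq]
      have hαle : α (y t) ≤ (K : ℝ) * B t := by
        have h1 : |α (y t) - α 0| ≤ K * |y t - 0| := by
          simpa [Real.dist_eq] using hlip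
        have h2 : |y t - 0| = B t := by
          rw [hyB]; simp [abs_of_pos hBpos]
        have h3 := (abs_le.1 h1).2
        rw [h2] at h3
        linarith [hα0 ▸ h3]
      have hlow := hbound t ht.1
      have : -(y' t) ≤ α (y t) := by linarith
      calc -(y' t) ≤ (K : ℝ) * B t := this.trans hαle
        _ < L * B t := by
            apply mul_lt_mul_of_pos_right _ hBpos
            simp [hL]
        _ = B' t := by simp [hB', hB]; ring
  have := key ⟨le_refl 0, ht₀⟩ -- dummy? no: we want at t₀
  have hfin : -(y t₀) ≤ B t₀ := key ⟨ht₀, le_refl t₀⟩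
  have : B t₀ = c' := by
    calc B t₀ = ε * Real.exp (L * t₀) := rfl
      _ = c' := div_mul_cancel₀ _ (Real.exp_ne_zero _)
  have : -(y t₀) ≤ c' := this ▸ hfin
  have : c' ≤ c := min_le_left _ _
  linarith [hfin, ‹B t₀ = c'›, ‹c' ≤ c›]
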